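/- Suppose (w*, r*) is a saddle point of g(w, r) = Σ_i w_i J_i(r_i) over W × R, where W is the probability simplex, each J_i is strictly decreasing on [r_low_i, r_high_i], and w*_i > 0 for all i. Then the max-min fair allocation is unique: any other saddle point (w*, r**) with the same weight w* satisfies r** = r*. -/

import Mathlib

open Finset

/-- The standard probability simplex in `ℝⁿ`. -/
def simplex (n : ℕ) : Set (Fin n → ℝ) :=
  {w | (∑ i, w i) = 1 ∧ ∀ i, 0 ≤ w i}

/-- A saddle point of a zero-sum game with payoff `g` over strategy sets `W` and `R`. -/
def IsSaddlePoint {α β : Type*} (W : Set α) (R : Set β) (g : α → β → ℝ) (w : α) (r : β) : Prop :=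
  w ∈ W ∧ r ∈ R ∧ (∀ w' ∈ W, g w' r ≤ g w r) ∧ (∀ r' ∈ R, g w r ≤ g w r')

/-- At a saddle point with all weights positive, every `J i (r i)` equals the game value. -/
lemma all_equal_value {n : ℕ} (J : Fin n → ℝ → ℝ)
    (R : Set (Fin n → ℝ))
    (g : (Fin n → ℝ) → (Fin n → ℝ) → ℝ)
    (hg : ∀ w r, g w r = ∑ i, w i * J i (r i))
    (wstar r : Fin n → ℝ)
    (hwpos : ∀ i, 0 < wstar i)
    (h : IsSaddlePoint (simplex n) R g wstar r) (i : Fin n) :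
    J i (r i) = g wstar r := by
  obtain ⟨⟨hsum, hnn⟩, hrR, hmax, hmin⟩ := h
  -- each J j (r j) ≤ value, via unit vectors
  have hle : ∀ j, J j (r j) ≤ g wstar r := by
    intro j
    have hmem : (Pi.single j 1 : Fin n → ℝ) ∈ simplex n := by
      constructor
      · simp [Pi.single_apply]
      · intro k; by_cases hk : k = j <;> simp [Pi.single_apply, hk]
    have := hmax _ hmem
    rwa [hg, Finset.sum_eq_single j (fun b _ hb => by simp [Pi.single_apply, hb])
      (fun hb => absurd (Finset.mem_univ j) hb), Pi.single_eq_same, one_mul] at this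
  -- weighted average equals value, so all terms equal value
  have hzero : ∑ j, wstar j * (g wstar r - J j (r j)) = 0 := by
    have : ∑ j, wstar j * (g wstar r - J j (r j))
        = (∑ j, wstar j) * g wstar r - ∑ j, wstar j * J j (r j) := by
      rw [Finset.sum_mul, ← Finset.sum_sub_distrib]; exact Finset.sum_congr rfl (fun x _ => by ring)
    rw [this, hsum, one_mul, ← hg, sub_self]
  have hterm : wstar i * (g wstar r - J i (r i)) = 0 := by
    have := (Finset.sum_eq_zero_iff_of_nonneg (fun j _ =>
      mul_nonneg (hwpos j).le (sub_nonneg.2 (hle j)))).1 hzero i (Finset.mem_univ i)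
    exact this
  have := mul_eq_zero.1 hterm
  rcases this with h0 | h0
  · exact absurd h0 (hwpos i).ne'
  · linarith [sub_eq_zero.1 h0]

/-- if all equilibrium weights are positive and each `J_i` is strictly
decreasing on its feasible interval, the max-min fair allocation is unique: any other
saddle point with the same weight vector has the same allocation. -/
theorem allocation_unique {n : ℕ} (J : Fin n → ℝ → ℝ) (rlow rhigh : Fin n → ℝ)
    (Rtot : ℝ) (hfeas : (∑ i, rlow i) < Rtot)
    (R : Set (Fin n → ℝ))
    (hRdef : R = {r | (∑ i, r i) ≤ Rtot ∧ ∀ i, rlow i ≤ r i ∧ r i ≤ rhigh i})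
    (hcont : ∀ i, ContinuousOn (J i) (Set.Icc (rlow i) (rhigh i)))
    (hanti : ∀ i, StrictAntiOn (J i) (Set.Icc (rlow i) (rhigh i)))
    (g : (Fin n → ℝ) → (Fin n → ℝ) → ℝ)
    (hg : ∀ w r, g w r = ∑ i, w i * J i (r i))
    (wstar rstar rstarstar : Fin n → ℝ)
    (hwpos : ∀ i, 0 < wstar i)
    (h₁ : IsSaddlePoint (simplex n) R g wstar rstar)
    (h₂ : IsSaddlePoint (simplex n) R g wstar rstarstar) :
    rstarstar = rstar := by
  have hv : g wstar rstar = g wstar rstarstar :=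
    le_antisymm (h₁.2.2.2 _ h₂.2.1) (h₂.2.2.2 _ h₁.2.1)
  have h1R := h₁.2.1
  have h2R := h₂.2.1
  rw [hRdef] at h1R h2R
  funext i
  have e1 := all_equal_value J R g hg wstar rstar hwpos h₁ i
  have e2 := all_equal_value J R g hg wstar rstarstar hwpos h₂ i
  have hJ : J i (rstarstar i) = J i (rstar i) := by rw [e1, e2, hv]
  exact (hanti i).injOn ⟨(h2R.2 i).1, (h2R.2 i).2⟩ ⟨(h1R.2 i).1, (h1R.2 i).2⟩ hJ
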